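/- Let k be a field of characteristic 0. If A(T) is an exponential matrix of Mat(n, k[T]), then A(T) = Exp(T·N) for a unique nilpotent matrix N ∈ Mat(n, k), where Exp denotes the matrix exponential (a finite sum since N is nilpotent). -/
import Mathlib

open Polynomial

section Aux
variable {k : Type*} [Field k]

private lemma algmap_eq' : (algebraMap k ((k[X])[X])) = (C : k[X] →+* (k[X])[X]).comp (C : k →+* k[X]) := rfl

private lemma aeval_CX' (p : k[X]) : aeval ((C X) : (k[X])[X]) p = C p := by
  have := hom_eval₂ p (C : k →+* k[X]) (C : k[X] →+* (k[X])[X]) X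
  rw [eval₂_C_X] at this
  rw [aeval_def, algmap_eq', ← this]

private lemma aeval_XX' (p : k[X]) : aeval ((X : (k[X])[X])) p = p.map C := by
  rw [aeval_def, algmap_eq']; rfl

private lemma hasse_map' (p : k[X]) (j : ℕ) :
    hasseDeriv j (p.map (C : k →+* k[X])) = (hasseDeriv j p).map C := by
  ext i; simp [hasseDeriv_coeff, coeff_map]

private lemma coeff_aeval_add' (p : k[X]) (i j : ℕ) :
    ((aeval ((C X + X) : (k[X])[X]) p).coeff j).coeff i
      = ((i + j).choose j : k) * p.coeff (i + j) := by
  have h1 : (aeval ((C X + X) : (k[X])[X]) p) = taylor X (p.map C) := by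
    rw [taylor_apply, comp, aeval_def, eval₂_map, add_comm]; rfl
  rw [h1, taylor_coeff, hasse_map', eval_map, eval₂_C_X, hasseDeriv_coeff]

private lemma matpow_eq_zero {n : ℕ} (N : Matrix (Fin n) (Fin n) k)
    (h : IsNilpotent N) : N ^ n = 0 := by
  have h2 : IsNilpotent (Matrix.toLinAlgEquiv' N) := h.map _
  have h3 := h2.charpoly_eq_X_pow_finrank
  have h4 := LinearMap.aeval_self_charpoly (Matrix.toLinAlgEquiv' N)
  rw [h3] at h4
  simp only [map_pow, aeval_X, Module.finrank_fin_fun] at h4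
  apply (Matrix.toLinAlgEquiv' (R := k) (n := Fin n)).injective
  rw [map_pow, map_zero]; exact h4

private lemma coeff_sum_entry {n : ℕ} (M : Matrix (Fin n) (Fin n) k) (a b : Fin n) (m : ℕ) :
    (((∑ i ∈ Finset.range n,
        (C ((i.factorial : k)⁻¹) * X ^ i) • ((M ^ i).map C)) : Matrix (Fin n) (Fin n) (Polynomial k)) a b).coeff m
      = if m < n then (m.factorial : k)⁻¹ * (M ^ m) a b else 0 := by
  rw [Matrix.sum_apply, finset_sum_coeff]
  have h : ∀ i, (((C ((i.factorial : k)⁻¹) * X ^ i) • ((M ^ i).map C)) a b).coeff m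
      = if m = i then (i.factorial : k)⁻¹ * (M ^ i) a b else 0 := by
    intro i
    rw [Matrix.smul_apply, Matrix.map_apply, smul_eq_mul, coeff_mul_C, coeff_C_mul, coeff_X_pow]
    split_ifs <;> ring
  simp_rw [h]
  rw [Finset.sum_ite_eq]
  simp [Finset.mem_range]

end Aux

/-- `A(T) ∈ Mat(n, k[T])` is an exponential matrix: `A(T)·A(T') = A(T+T')` in
`Mat(n, k[T,T'])` and `A(0) = I_n`. -/
def IsExpMat {k : Type*} [Field k] {n : ℕ}
    (A : Matrix (Fin n) (Fin n) (Polynomial k)) : Prop :=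
  A.map (fun q => aeval ((C X + X : Polynomial (Polynomial k))) q) =
    A.map (fun q => aeval ((C X : Polynomial (Polynomial k))) q) *
      A.map (fun q => aeval (X : Polynomial (Polynomial k)) q) ∧
  A.map (fun q => q.eval 0) = 1

/-- In characteristic zero, every exponential matrix is `Exp(T·N)` for a unique
nilpotent matrix `N` (a finite sum: `N^i = 0` for `i ≥ n`). -/
theorem stmt_4 {k : Type*} [Field k] [CharZero k] {n : ℕ}
    (A : Matrix (Fin n) (Fin n) (Polynomial k)) (hA : IsExpMat A) :
    ∃! N : Matrix (Fin n) (Fin n) k, IsNilpotent N ∧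
      A = ∑ i ∈ Finset.range n,
        (C ((i.factorial : k)⁻¹) * X ^ i) • ((N ^ i).map C) := by
  obtain ⟨h1, h2⟩ := hA
  -- coefficient 0
  have hB0 : ∀ a b, (A a b).coeff 0 = (1 : Matrix (Fin n) (Fin n) k) a b := by
    intro a b
    have := congrFun (congrFun h2 a) b
    rw [Matrix.map_apply] at this
    rw [coeff_zero_eq_eval_zero]
    exact this
  -- key coefficient relation
  have key : ∀ i j a b, ((i + j).choose j : k) * (A a b).coeff (i + j)
      = ∑ c, (A a c).coeff i * (A c b).coeff j := by
    intro i j a b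
    have e := congrFun (congrFun h1 a) b
    calc ((i + j).choose j : k) * (A a b).coeff (i + j)
        = (((A.map (fun q => aeval ((C X + X : Polynomial (Polynomial k))) q)) a b).coeff j).coeff i := by
          rw [Matrix.map_apply, coeff_aeval_add']
      _ = (((A.map (fun q => aeval ((C X : Polynomial (Polynomial k))) q) *
              A.map (fun q => aeval (X : Polynomial (Polynomial k)) q)) a b).coeff j).coeff i := by
          rw [e]
      _ = ∑ c, (A a c).coeff i * (A c b).coeff j := by
          rw [Matrix.mul_apply, finset_sum_coeff, finset_sum_coeff]
          refine Finset.sum_congr rfl fun c _ => ?_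
          simp only [Matrix.map_apply]
          rw [aeval_CX', aeval_XX', coeff_C_mul, coeff_map, coeff_mul_C]
  set N : Matrix (Fin n) (Fin n) k := Matrix.of (fun a b => (A a b).coeff 1) with hN
  -- main coefficient formula
  have hmain : ∀ m a b, (A a b).coeff m = (m.factorial : k)⁻¹ * (N ^ m) a b := by
    intro m
    induction m with
    | zero =>
      intro a b
      simp only [Nat.factorial_zero, Nat.cast_one, inv_one, pow_zero, one_mul]
      exact hB0 a b
    | succ m ih =>
      intro a b
      have hne : ((m + 1 : ℕ) : k) ≠ 0 := Nat.cast_ne_zero.2 (Nat.succ_ne_zero m)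
      have hk := key m 1 a b
      rw [Nat.choose_one_right] at hk
      have hsum : ∑ c, (A a c).coeff m * (A c b).coeff 1
          = (m.factorial : k)⁻¹ * ((N ^ (m + 1)) a b) := by
        rw [pow_succ, Matrix.mul_apply, Finset.mul_sum]
        refine Finset.sum_congr rfl fun c _ => ?_
        rw [ih a c]
        show (↑m.factorial)⁻¹ * (N ^ m) a c * (N c b) = _
        ring
      have hstep : (A a b).coeff (m + 1)
          = ((m + 1 : ℕ) : k)⁻¹ * (((m + 1 : ℕ) : k) * (A a b).coeff (m + 1)) :=
        (inv_mul_cancel_left₀ hne _).symm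
      rw [hstep, hk, hsum, Nat.factorial_succ, Nat.cast_mul, mul_inv, mul_assoc]
  -- nilpotency
  have hNnil : IsNilpotent N := by
    set d := Finset.sup Finset.univ (fun ab : Fin n × Fin n => (A ab.1 ab.2).natDegree) with hd
    refine ⟨d + 1, ?_⟩
    have hz : ∀ a b, (A a b).coeff (d + 1) = 0 := by
      intro a b
      apply coeff_eq_zero_of_natDegree_lt
      exact Nat.lt_succ_of_le (Finset.le_sup (f := fun ab : Fin n × Fin n => (A ab.1 ab.2).natDegree) (Finset.mem_univ (a, b)))
    ext a b
    have := hmain (d + 1) a b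
    rw [hz a b] at this
    have hfac : (((d + 1).factorial : ℕ) : k) ≠ 0 := Nat.cast_ne_zero.2 (Nat.factorial_ne_zero _)
    have := (eq_comm.mp this)
    rcases mul_eq_zero.mp this with h | h
    · exact absurd h (inv_ne_zero hfac)
    · simpa using h
  have hNn : N ^ n = 0 := matpow_eq_zero N hNnil
  have hNpow : ∀ m, n ≤ m → N ^ m = 0 := by
    intro m hm
    rw [← Nat.sub_add_cancel hm, pow_add, hNn, mul_zero]
  -- existence equation
  have hNeq : A = ∑ i ∈ Finset.range n,
      (C ((i.factorial : k)⁻¹) * X ^ i) • ((N ^ i).map C) := by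
    ext a b m
    rw [coeff_sum_entry, hmain]
    split_ifs with h
    · rfl
    · rw [hNpow m (not_lt.mp h)]
      simp
  refine ⟨N, ⟨hNnil, hNeq⟩, ?_⟩
  rintro M ⟨hMnil, hMeq⟩
  by_cases hn2 : 1 < n
  · ext a b
    have hM1 : (A a b).coeff 1 = ((Nat.factorial 1 : ℕ) : k)⁻¹ * (M ^ 1) a b := by
      rw [hMeq, coeff_sum_entry, if_pos hn2]
    rw [pow_one] at hM1
    simp only [Nat.factorial_one, Nat.cast_one, inv_one, one_mul] at hM1
    show M a b = (A a b).coeff 1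
    rw [hM1]
  · rcases Nat.le_one_iff_eq_zero_or_eq_one.mp (not_lt.mp hn2) with h | h
    · subst h; ext a b; exact a.elim0
    · subst h
      have hM : M ^ 1 = 0 := matpow_eq_zero M hMnil
      have hN1 : N ^ 1 = 0 := matpow_eq_zero N hNnil
      rw [pow_one] at hM hN1
      rw [hM, hN1]
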